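/- arXiv:1412.3721 — 2 statements merged into one kernel-verified Lean document; each statement's English description precedes it below -/
import Mathlib

section
/- The 0/1 knapsack problem reduces to the improvable maximum spanning tree (IMST) problem: given knapsack items with profits p_e and costs c_e and capacity B, construct a path graph with one edge per item, unimproved length 0 and cost 0, improved length p_e and cost c_e, and budget B; then the maximum length of an improvable spanning tree within budget B equals the optimal knapsack profit. -/
open SimpleGraph

/-- `T` is (the edge set of) a spanning tree of `G`. -/
def IsSpanningTree {V : Type*} (G : SimpleGraph V) (T : Set (Sym2 V)) : Prop :=
  T ⊆ G.edgeSet ∧ (SimpleGraph.fromEdgeSet T).Connected ∧ (SimpleGraph.fromEdgeSet T).IsAcyclic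

/-- The item index associated with an edge of the path graph on `Fin (n+1)`:
the smaller endpoint of the edge. -/
def edgeIdx {n : ℕ} (e : Sym2 (Fin (n + 1))) : ℕ :=
  Sym2.lift ⟨fun a b => min a.val b.val, fun a b => min_comm _ _⟩ e

/-- Weight on edges of the path graph induced by a weight `p` on the `n` items. -/
def edgeVal {n : ℕ} (p : Fin n → ℝ) (e : Sym2 (Fin (n + 1))) : ℝ :=
  if h : edgeIdx e < n then p ⟨edgeIdx e, h⟩ else 0

/-- The edge of the path graph associated to item `i`. -/
def itemEdge {n : ℕ} (i : Fin n) : Sym2 (Fin (n + 1)) :=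
  s(⟨i.val, by omega⟩, ⟨i.val + 1, by omega⟩)

lemma edgeIdx_itemEdge {n : ℕ} (i : Fin n) : edgeIdx (itemEdge i) = i.val := by
  simp [itemEdge, edgeIdx]

lemma itemEdge_injective {n : ℕ} : Function.Injective (itemEdge (n := n)) := by
  intro i j h
  have := congrArg edgeIdx h
  rw [edgeIdx_itemEdge, edgeIdx_itemEdge] at this
  exact Fin.ext this

lemma edgeVal_itemEdge {n : ℕ} (p : Fin n → ℝ) (i : Fin n) :
    edgeVal p (itemEdge i) = p i := by
  simp [edgeVal, edgeIdx_itemEdge, i.isLt]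

lemma itemEdge_mem_edgeSet {n : ℕ} (i : Fin n) :
    itemEdge i ∈ (pathGraph (n + 1)).edgeSet := by
  rw [itemEdge, mem_edgeSet, pathGraph_adj]
  left; rfl

lemma edge_eq_itemEdge {n : ℕ} {e : Sym2 (Fin (n + 1))}
    (he : e ∈ (pathGraph (n + 1)).edgeSet) : ∃ i : Fin n, e = itemEdge i := by
  induction e using Sym2.ind with
  | _ a b =>
    rw [mem_edgeSet, pathGraph_adj] at he
    rcases he with h | h
    · refine ⟨⟨a.val, by omega⟩, ?_⟩
      rw [itemEdge, Sym2.eq_iff]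
      left
      exact ⟨Fin.ext rfl, Fin.ext h.symm⟩
    · refine ⟨⟨b.val, by omega⟩, ?_⟩
      rw [itemEdge, Sym2.eq_iff]
      right
      exact ⟨Fin.ext h.symm, Fin.ext rfl⟩

lemma walk_pres {V : Type*} {G : SimpleGraph V} (P : V → Prop)
    (h : ∀ a b : V, G.Adj a b → (P a ↔ P b)) {u v : V} (hr : G.Reachable u v) :
    P u ↔ P v := by
  obtain ⟨w⟩ := hr
  induction w with
  | nil => rfl
  | cons ha _ ih => exact (h _ _ ha).trans ih

lemma not_reach_del {n : ℕ} (a b : Fin (n + 1)) (hab : a.val + 1 = b.val) :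
    ¬ ((pathGraph (n + 1)).deleteEdges {s(a, b)}).Reachable a b := by
  intro hr
  have key := walk_pres (G := (pathGraph (n + 1)).deleteEdges {s(a, b)})
    (fun v => v.val ≤ a.val) ?_ hr
  · simp at key; omega
  · intro x y hxy
    rw [deleteEdges_adj] at hxy
    obtain ⟨hadj, hne⟩ := hxy
    rw [pathGraph_adj] at hadj
    simp only [Set.mem_singleton_iff, Sym2.eq, Sym2.rel_iff', Prod.mk.injEq, Prod.swap_prod_mk,
      not_or, not_and] at hne
    obtain ⟨h1, h2⟩ := hne
    simp only [Fin.ext_iff] at h1 h2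
    constructor <;> intro h <;> by_contra h' <;> omega

lemma pathGraph_acyclic (n : ℕ) : (pathGraph (n + 1)).IsAcyclic := by
  rw [isAcyclic_iff_forall_adj_isBridge]
  intro v w hvw
  rw [isBridge_iff]
  rw [pathGraph_adj] at hvw
  rcases hvw with h | h
  · exact not_reach_del v w h
  · intro hr
    rw [Sym2.eq_swap] at hr
    exact not_reach_del w v h hr.symm


/-- Knapsack reduces to IMST: on the path graph with one edge per item (unimproved length
`0` and cost `0`, improved length `p_e` and cost `c_e`) and budget `B`, the maximum length
of an improvable spanning tree within budget `B` equals the optimal knapsack profit. -/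
theorem stmt10 (n : ℕ) (p c : Fin n → ℝ) (hp : ∀ e, 0 ≤ p e) (hc : ∀ e, 0 ≤ c e)
    (B : ℝ) (hB : 0 ≤ B) :
    sSup {v : ℝ | ∃ (T S : Finset (Sym2 (Fin (n + 1)))),
        IsSpanningTree (SimpleGraph.pathGraph (n + 1)) (T : Set (Sym2 (Fin (n + 1)))) ∧
        S ⊆ T ∧ S.sum (edgeVal c) ≤ B ∧ v = S.sum (edgeVal p)} =
      sSup {v : ℝ | ∃ S : Finset (Fin n), S.sum c ≤ B ∧ v = S.sum p} := by
  congr 1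
  ext v
  constructor
  · rintro ⟨T, S, ⟨hTE, _, _⟩, hST, hcost, rfl⟩
    set S' : Finset (Fin n) := Finset.univ.filter (fun i => itemEdge i ∈ S) with hS'
    have hSeq : S = S'.image itemEdge := by
      ext e
      simp only [Finset.mem_image, hS', Finset.mem_filter, Finset.mem_univ, true_and]
      constructor
      · intro he
        obtain ⟨i, rfl⟩ := edge_eq_itemEdge (hTE (hST he))
        exact ⟨i, he, rfl⟩
      · rintro ⟨i, hi, rfl⟩; exact hi
    have hsum : ∀ w : Fin n → ℝ, S.sum (edgeVal w) = S'.sum w := by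
      intro w
      rw [hSeq, Finset.sum_image (fun x _ y _ h => itemEdge_injective h)]
      exact Finset.sum_congr rfl fun i _ => edgeVal_itemEdge w i
    exact ⟨S', (hsum c) ▸ hcost, hsum p⟩
  · rintro ⟨S', hcost, rfl⟩
    refine ⟨Finset.univ.image itemEdge, S'.image itemEdge, ?_, ?_, ?_, ?_⟩
    · have hTE : ((Finset.univ.image (itemEdge (n := n)) : Finset _) : Set (Sym2 (Fin (n+1))))
          = (pathGraph (n + 1)).edgeSet := by
        ext e
        simp only [Finset.coe_image, Finset.coe_univ, Set.image_univ, Set.mem_range]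
        constructor
        · rintro ⟨i, rfl⟩; exact itemEdge_mem_edgeSet i
        · intro he; obtain ⟨i, rfl⟩ := edge_eq_itemEdge he; exact ⟨i, rfl⟩
      rw [IsSpanningTree, hTE, fromEdgeSet_edgeSet]
      exact ⟨le_refl _, pathGraph_connected n, pathGraph_acyclic n⟩
    · exact Finset.image_subset_image (Finset.subset_univ _)
    · rw [Finset.sum_image (fun x _ y _ h => itemEdge_injective h)]
      calc S'.sum (fun i => edgeVal c (itemEdge i)) = S'.sum c :=
            Finset.sum_congr rfl fun i _ => edgeVal_itemEdge c i
        _ ≤ B := hcost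
    · rw [Finset.sum_image (fun x _ y _ h => itemEdge_injective h)]
      exact (Finset.sum_congr rfl fun i _ => edgeVal_itemEdge p i).symm
end

section
/- Correctness of the DP for non-uniform-cost WILDAG: define L(v, w) as the minimum total improvement cost over v-t paths of total length exactly w (where each edge contributes l_e at cost 0 or h_e at cost q_e), with base cases L(t,0)=0, L(t,w)=∞ for w>0, and L(v,w)=∞ for w<0. Then L satisfies L(v,w) = min over edges (v,u) of min{ L(u, w - h_{(v,u)}) + q_{(v,u)}, L(u, w - l_{(v,u)}) }, and the optimum WILDAG value with budget B equals the largest w with L(s,w) ≤ B. -/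
open scoped ENNReal
/-- `ReachC E l h q t v w cst`: there is a path from `v` to `t` in the DAG with edge
relation `E`, where each edge contributes its unimproved length `l` at cost `0` or its
improved length `h` at cost `q`, with total length `w` and total improvement cost `cst`. -/
inductive ReachC {N : ℕ} (E : Fin N → Fin N → Prop) (l h : Fin N → Fin N → ℤ)
    (q : Fin N → Fin N → ℝ) (t : Fin N) : Fin N → ℤ → ℝ → Prop
  | base : ReachC E l h q t t 0 0
  | low {v u : Fin N} {w : ℤ} {cst : ℝ} :
      E v u → ReachC E l h q t u w cst → ReachC E l h q t v (l v u + w) cst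
  | high {v u : Fin N} {w : ℤ} {cst : ℝ} :
      E v u → ReachC E l h q t u w cst → ReachC E l h q t v (h v u + w) (q v u + cst)


private lemma reachC_cases {N : ℕ} {E : Fin N → Fin N → Prop} {l h : Fin N → Fin N → ℤ}
    {q : Fin N → Fin N → ℝ} {t v : Fin N} {w : ℤ} {cst : ℝ}
    (hr : ReachC E l h q t v w cst) :
    (v = t ∧ w = 0 ∧ cst = 0) ∨
    ∃ u w' cst', E v u ∧ ReachC E l h q t u w' cst' ∧
      ((w = l v u + w' ∧ cst = cst') ∨ (w = h v u + w' ∧ cst = q v u + cst')) := by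
  cases hr with
  | base => exact Or.inl ⟨rfl, rfl, rfl⟩
  | low hE hr => exact Or.inr ⟨_, _, _, hE, hr, Or.inl ⟨rfl, rfl⟩⟩
  | high hE hr => exact Or.inr ⟨_, _, _, hE, hr, Or.inr ⟨rfl, rfl⟩⟩

/-- Correctness of the DP for non-uniform-cost WILDAG: if `L(v,w)` is the minimum total
improvement cost over `v-t` paths of total length exactly `w`, then `L` satisfies the
recurrence `L(v,w) = min over edges (v,u) of min{L(u, w - h) + q, L(u, w - l)}`, and the
optimum WILDAG value with budget `B` equals the largest `w` with `L(s,w) ≤ B`. -/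
theorem stmt13 {N : ℕ} (E : Fin N → Fin N → Prop) (hE : ∀ u v, E u v → u < v)
    (l h : Fin N → Fin N → ℤ) (q : Fin N → Fin N → ℝ) (hq : ∀ u v, 0 ≤ q u v)
    (s t : Fin N) (ht : ∀ u, ¬ E t u) (B : ℝ) (hB : 0 ≤ B)
    (L : Fin N → ℤ → ℝ≥0∞)
    (hL : ∀ (v : Fin N) (w : ℤ),
      L v w = sInf {x : ℝ≥0∞ | ∃ cst : ℝ,
        ReachC E l h q t v w cst ∧ x = ENNReal.ofReal cst}) :
    (∀ (v : Fin N), v ≠ t → ∀ w : ℤ,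
      L v w = sInf {x : ℝ≥0∞ | ∃ u : Fin N, E v u ∧
        (x = L u (w - h v u) + ENNReal.ofReal (q v u) ∨ x = L u (w - l v u))}) ∧
    sSup {w : ℤ | ∃ cst : ℝ, ReachC E l h q t s w cst ∧ cst ≤ B} =
      sSup {w : ℤ | L s w ≤ ENNReal.ofReal B} := by
  have hcst : ∀ {v : Fin N} {w : ℤ} {cst : ℝ}, ReachC E l h q t v w cst → 0 ≤ cst := by
    intro v w cst hr
    induction hr with
    | base => exact le_refl 0
    | low _ _ ih => exact ih
    | high _ _ ih => exact add_nonneg (hq _ _) ih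
  have hfin : ∀ n : ℕ, ∀ v : Fin N, N - v.val ≤ n →
      {p : ℤ × ℝ | ReachC E l h q t v p.1 p.2}.Finite := by
    intro n
    induction n with
    | zero => intro v hv; have := v.isLt; omega
    | succ n ih =>
      intro v hv
      have hsub : {p : ℤ × ℝ | ReachC E l h q t v p.1 p.2} ⊆
          insert ((0 : ℤ), (0 : ℝ))
            (⋃ u ∈ {u : Fin N | E v u},
              ((fun p : ℤ × ℝ => (l v u + p.1, p.2)) ''
                {p : ℤ × ℝ | ReachC E l h q t u p.1 p.2}) ∪
              ((fun p : ℤ × ℝ => (h v u + p.1, q v u + p.2)) ''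
                {p : ℤ × ℝ | ReachC E l h q t u p.1 p.2})) := by
        rintro ⟨w, cst⟩ hr
        rcases reachC_cases hr with ⟨-, hw, hc⟩ | ⟨u, w', cst', hEvu, hr', hcase⟩
        · subst hw; subst hc; exact Set.mem_insert _ _
        · rcases hcase with ⟨hw, hc⟩ | ⟨hw, hc⟩ <;> subst hw <;> subst hc
          · exact Set.mem_insert_of_mem _ (Set.mem_biUnion hEvu
              (Or.inl ⟨(w', _), hr', rfl⟩))
          · exact Set.mem_insert_of_mem _ (Set.mem_biUnion hEvu
              (Or.inr ⟨(w', _), hr', rfl⟩))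
      refine Set.Finite.subset (Set.Finite.insert _ ?_) hsub
      refine Set.Finite.biUnion (Set.toFinite _) fun u hu => ?_
      have hvu : v < u := hE v u hu
      have hfu : {p : ℤ × ℝ | ReachC E l h q t u p.1 p.2}.Finite := by
        refine ih u ?_
        have h1 : v.val < u.val := hvu
        have := u.isLt
        omega
      exact (hfu.image _).union (hfu.image _)
  have hset : {w : ℤ | ∃ cst : ℝ, ReachC E l h q t s w cst ∧ cst ≤ B} =
      {w : ℤ | L s w ≤ ENNReal.ofReal B} := by
    ext w
    constructor
    · rintro ⟨cst, hr, hle⟩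
      show L s w ≤ _
      rw [hL]
      exact le_trans (sInf_le ⟨cst, hr, rfl⟩) (ENNReal.ofReal_le_ofReal hle)
    · intro hle
      have hle' : sInf {x : ℝ≥0∞ | ∃ cst : ℝ,
          ReachC E l h q t s w cst ∧ x = ENNReal.ofReal cst} ≤ ENNReal.ofReal B := by
        rw [← hL]; exact hle
      set S := {x : ℝ≥0∞ | ∃ cst : ℝ,
          ReachC E l h q t s w cst ∧ x = ENNReal.ofReal cst} with hS
      have hSfin : S.Finite := by
        have hsub : S ⊆ (fun p : ℤ × ℝ => ENNReal.ofReal p.2) ''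
            {p : ℤ × ℝ | ReachC E l h q t s p.1 p.2} := by
          rintro x ⟨cst, hr, rfl⟩
          exact ⟨(w, cst), hr, rfl⟩
        exact Set.Finite.subset ((hfin N s (by omega)).image _) hsub
      have hSne : S.Nonempty := by
        by_contra hne
        rw [Set.not_nonempty_iff_eq_empty] at hne
        rw [hne, sInf_empty] at hle'
        exact absurd hle' (by simp)
      obtain ⟨cst, hr, hx⟩ := hSne.csInf_mem hSfin
      have hxle : ENNReal.ofReal cst ≤ ENNReal.ofReal B := hx ▸ hle'
      exact ⟨cst, hr, (ENNReal.ofReal_le_ofReal_iff hB).mp hxle⟩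
  refine ⟨?_, by rw [hset]⟩
  intro v hv w
  rw [hL]
  apply le_antisymm
  · apply le_sInf
    rintro x ⟨u, hEvu, hx | hx⟩
    · subst hx
      rw [hL, ENNReal.sInf_add]
      refine le_iInf₂ fun b hb => ?_
      obtain ⟨cst, hr, rfl⟩ := hb
      have hrv : ReachC E l h q t v w (q v u + cst) := by
        have := ReachC.high hEvu hr
        simpa using this
      refine sInf_le ⟨q v u + cst, hrv, ?_⟩
      rw [ENNReal.ofReal_add (hq _ _) (hcst hr), add_comm]
    · subst hx
      rw [hL]
      apply sInf_le_sInf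
      rintro x ⟨cst, hr, rfl⟩
      refine ⟨cst, ?_, rfl⟩
      have := ReachC.low hEvu hr
      simpa using this
  · apply le_sInf
    rintro x ⟨cst, hr, rfl⟩
    rcases reachC_cases hr with ⟨hvt, -, -⟩ | ⟨u, w', cst', hEvu, hr', hcase⟩
    · exact absurd hvt hv
    · rcases hcase with ⟨hw, hc⟩ | ⟨hw, hc⟩ <;> subst hw <;> subst hc
      · refine le_trans (sInf_le ⟨u, hEvu, Or.inr rfl⟩) ?_
        rw [hL]
        refine sInf_le ⟨cst, ?_, rfl⟩
        simpa using hr'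
      · refine le_trans (sInf_le ⟨u, hEvu, Or.inl rfl⟩) ?_
        have h1 : L u (h v u + w' - h v u) ≤ ENNReal.ofReal cst' := by
          rw [hL]
          refine sInf_le ⟨cst', ?_, rfl⟩
          simpa using hr'
        rw [ENNReal.ofReal_add (hq _ _) (hcst hr'), add_comm (ENNReal.ofReal (q v u))]
        exact add_le_add_left h1 _
end
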